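/- Let W ∈ ℝ^{m₁m₂×n₁n₂} and let ℛ(W) = Σ_{i=1}^r σ_i u_i v_iᵀ be a singular value decomposition of its rearrangement, with singular values σ₁ ≥ σ₂ ≥ … ≥ σ_r > 0, orthonormal u_i ∈ ℝ^{m₁n₁}, orthonormal v_i ∈ ℝ^{m₂n₂}, and r = rank(ℛ(W)). For k ≤ r define W_k = Σ_{j=1}^k mat(σ_j u_j) ⊗ mat(v_j), where mat(σ_j u_j) ∈ ℝ^{m₁×n₁} and mat(v_j) ∈ ℝ^{m₂×n₂}. Then W_k minimizes ‖W − Σ_{j=1}^k L^{(j)} ⊗ R^{(j)}‖_F² over all choices of L^{(j)} ∈ ℝ^{m₁×n₁}, R^{(j)} ∈ ℝ^{m₂×n₂}, j = 1,…,k, and the minimal value is ‖W − W_k‖_F² = Σ_{i=k+1}^r σ_i². -/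

import Mathlib

open Matrix Kronecker

/-- The rearrangement `ℛ(W) ∈ ℝ^{m₁n₁×m₂n₂}` of `W ∈ ℝ^{m₁m₂×n₁n₂}`, defined entrywise by
`ℛ(W)_{(i₁,j₁),(i₂,j₂)} = W_{(i₁,i₂),(j₁,j₂)}`. -/
def rearrange {m₁ m₂ n₁ n₂ : ℕ} (W : Matrix (Fin m₁ × Fin m₂) (Fin n₁ × Fin n₂) ℝ) :
    Matrix (Fin m₁ × Fin n₁) (Fin m₂ × Fin n₂) ℝ :=
  fun p q => W (p.1, q.1) (p.2, q.2)

/-- The Frobenius norm: the square root of the sum of squared entries. -/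
noncomputable def frob {m n : Type*} [Fintype m] [Fintype n] (A : Matrix m n ℝ) : ℝ :=
  Real.sqrt (∑ i, ∑ j, (A i j) ^ 2)

/-- Matricization of a vector indexed by the pairs `(i₁, j₁) ∈ [m₁]×[n₁]` indexing the rows
(resp. columns) of the rearrangement, producing the matrix in `ℝ^{m₁×n₁}` whose `(i₁,j₁)`
entry is the `(i₁,j₁)` coordinate of the vector. -/
def matPair {a b : ℕ} (y : Fin a × Fin b → ℝ) : Matrix (Fin a) (Fin b) ℝ :=
  fun i j => y (i, j)

open Finset

private lemma euc_inner {ι : Type*} [Fintype ι] (f g : EuclideanSpace ℝ ι) :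
    (inner ℝ f g : ℝ) = ∑ i, f i * g i := by
  simp [PiLp.inner_apply, RCLike.inner_apply, mul_comm]

private lemma ortho_sum {ι : Type*} [Fintype ι] {n : ℕ} {u : Fin n → EuclideanSpace ℝ ι}
    (hu : Orthonormal ℝ u) (i j : Fin n) :
    ∑ p, u i p * u j p = if i = j then 1 else 0 := by
  rw [← euc_inner]; exact orthonormal_iff_ite.mp hu i j

private lemma sum_sq_ortho {κ : Type*} [Fintype κ] {n : ℕ} (v : Fin n → κ → ℝ)
    (hv : ∀ i j, ∑ q, v i q * v j q = if i = j then 1 else 0)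
    (s : Finset (Fin n)) (e : Fin n → ℝ) :
    ∑ q, (∑ i ∈ s, e i * v i q) ^ 2 = ∑ i ∈ s, e i ^ 2 := by
  have h1 : ∀ q, (∑ i ∈ s, e i * v i q) ^ 2
      = ∑ i ∈ s, ∑ j ∈ s, (e i * e j) * (v i q * v j q) := by
    intro q
    rw [sq, Finset.sum_mul_sum]
    exact Finset.sum_congr rfl fun i _ => Finset.sum_congr rfl fun j _ => by ring
  calc ∑ q, (∑ i ∈ s, e i * v i q) ^ 2
      = ∑ i ∈ s, ∑ j ∈ s, (e i * e j) * ∑ q, v i q * v j q := by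
        simp only [h1]
        rw [Finset.sum_comm]
        refine Finset.sum_congr rfl fun i _ => ?_
        rw [Finset.sum_comm]
        exact Finset.sum_congr rfl fun j _ => (Finset.mul_sum _ _ _).symm
    _ = ∑ i ∈ s, e i ^ 2 := by
        refine Finset.sum_congr rfl fun i hi => ?_
        simp only [hv, mul_ite, mul_one, mul_zero]
        rw [Finset.sum_ite_eq s i (fun j => e i * e j)]
        simp [hi, sq]

private lemma prod_ortho {ι κ : Type*} [Fintype ι] [Fintype κ] {n : ℕ}
    {u : Fin n → ι → ℝ} {v : Fin n → κ → ℝ}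
    (hu : ∀ i j, ∑ p, u i p * u j p = if i = j then 1 else 0)
    (hv : ∀ i j, ∑ q, v i q * v j q = if i = j then 1 else 0) (i j : Fin n) :
    ∑ pq : ι × κ, (u i pq.1 * v i pq.2) * (u j pq.1 * v j pq.2)
      = if i = j then 1 else 0 := by
  rw [Fintype.sum_prod_type]
  have h : ∀ p, ∑ q, (u i p * v i q) * (u j p * v j q)
      = (u i p * u j p) * ∑ q, v i q * v j q := by
    intro p
    rw [Finset.mul_sum]
    exact Finset.sum_congr rfl fun q _ => by ring
  simp only [h, ← Finset.sum_mul, hu, hv]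
  by_cases hij : i = j <;> simp [hij]

private lemma card_filter_lt' {r k : ℕ} (hk : k ≤ r) :
    (Finset.univ.filter (fun i : Fin r => (i : ℕ) < k)).card = k := by
  refine (Finset.card_bij' (fun (a : Fin r) (ha : a ∈ Finset.univ.filter (fun i : Fin r => (i : ℕ) < k)) =>
      (⟨(a : ℕ), (Finset.mem_filter.mp ha).2⟩ : Fin k))
    (fun (b : Fin k) (_ : b ∈ Finset.univ) => Fin.castLE hk b) ?_ ?_ ?_ ?_).trans (by simp)
  · intro a ha; exact Finset.mem_univ _
  · intro b _; exact Finset.mem_filter.mpr ⟨Finset.mem_univ _, b.isLt⟩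
  · intro a ha; rfl
  · intro b _; rfl

private lemma maj {r k : ℕ} (hk : k ≤ r) (σ : Fin r → ℝ) (hσpos : ∀ i, 0 < σ i)
    (hσmono : ∀ i j : Fin r, i ≤ j → σ j ≤ σ i) (c : Fin r → ℝ)
    (hc0 : ∀ i, 0 ≤ c i) (hc1 : ∀ i, c i ≤ 1) (hcs : ∑ i, c i ≤ (k : ℝ)) :
    ∑ i, σ i ^ 2 * c i ≤ ∑ i ∈ Finset.univ.filter (fun i : Fin r => (i : ℕ) < k), σ i ^ 2 := by
  rcases eq_or_lt_of_le hk with h | h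
  · have hfu : Finset.univ.filter (fun i : Fin r => (i : ℕ) < k) = Finset.univ := by
      ext i; simp only [Finset.mem_filter, Finset.mem_univ, true_and, iff_true]
      exact h ▸ i.isLt
    rw [hfu]
    refine Finset.sum_le_sum fun i _ => ?_
    calc σ i ^ 2 * c i ≤ σ i ^ 2 * 1 := mul_le_mul_of_nonneg_left (hc1 i) (sq_nonneg _)
      _ = σ i ^ 2 := mul_one _
  · set i₀ : Fin r := ⟨k, h⟩ with hi₀
    set t := σ i₀ ^ 2 with ht
    have ht0 : 0 ≤ t := sq_nonneg _
    have hsplit : ∑ i, σ i ^ 2 * c i = (∑ i, (σ i ^ 2 - t) * c i) + t * ∑ i, c i := by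
      rw [Finset.mul_sum, ← Finset.sum_add_distrib]
      exact Finset.sum_congr rfl fun i _ => by ring
    have h1 : ∑ i, (σ i ^ 2 - t) * c i
        ≤ ∑ i ∈ Finset.univ.filter (fun i : Fin r => (i : ℕ) < k), (σ i ^ 2 - t) := by
      rw [← Finset.sum_filter_add_sum_filter_not Finset.univ (fun i : Fin r => (i : ℕ) < k)]
      have h2 : ∑ i ∈ Finset.univ.filter (fun i : Fin r => ¬ (i : ℕ) < k), (σ i ^ 2 - t) * c i ≤ 0 := by
        refine Finset.sum_nonpos fun i hi => ?_
        have hik : k ≤ (i : ℕ) := not_lt.mp (Finset.mem_filter.mp hi).2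
        have hle : σ i ≤ σ i₀ := hσmono i₀ i hik
        have hσt : σ i ^ 2 ≤ t := by
          rw [ht]; exact pow_le_pow_left₀ (le_of_lt (hσpos i)) hle 2
        exact mul_nonpos_of_nonpos_of_nonneg (by linarith) (hc0 i)
      have h3 : ∑ i ∈ Finset.univ.filter (fun i : Fin r => (i : ℕ) < k), (σ i ^ 2 - t) * c i
          ≤ ∑ i ∈ Finset.univ.filter (fun i : Fin r => (i : ℕ) < k), (σ i ^ 2 - t) := by
        refine Finset.sum_le_sum fun i hi => ?_
        have hik : (i : ℕ) < k := (Finset.mem_filter.mp hi).2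
        have hle : σ i₀ ≤ σ i := hσmono i i₀ (le_of_lt hik)
        have hσt : t ≤ σ i ^ 2 := by
          rw [ht]; exact pow_le_pow_left₀ (le_of_lt (hσpos i₀)) hle 2
        calc (σ i ^ 2 - t) * c i ≤ (σ i ^ 2 - t) * 1 :=
              mul_le_mul_of_nonneg_left (hc1 i) (by linarith)
          _ = σ i ^ 2 - t := mul_one _
      linarith
    have h4 : ∑ i ∈ Finset.univ.filter (fun i : Fin r => (i : ℕ) < k), (σ i ^ 2 - t)
        = (∑ i ∈ Finset.univ.filter (fun i : Fin r => (i : ℕ) < k), σ i ^ 2) - k * t := by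
      rw [Finset.sum_sub_distrib, Finset.sum_const, card_filter_lt' hk, nsmul_eq_mul]
    have h5 : t * ∑ i, c i ≤ t * k := mul_le_mul_of_nonneg_left hcs ht0
    linarith

private lemma lowerBound {ι κ : Type*} [Fintype ι] [Fintype κ] {r k : ℕ} (hk : k ≤ r)
    (σ : Fin r → ℝ) (hσpos : ∀ i, 0 < σ i) (hσmono : ∀ i j : Fin r, i ≤ j → σ j ≤ σ i)
    (u : Fin r → EuclideanSpace ℝ ι) (v : Fin r → EuclideanSpace ℝ κ)
    (hu : Orthonormal ℝ u) (hv : Orthonormal ℝ v)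
    (x : Fin k → EuclideanSpace ℝ ι) (y : Fin k → EuclideanSpace ℝ κ) :
    ∑ i ∈ Finset.univ.filter (fun i : Fin r => k ≤ (i : ℕ)), σ i ^ 2 ≤
      ∑ p, ∑ q, ((∑ i, σ i * (u i p * v i q)) - ∑ j, x j p * y j q) ^ 2 := by
  classical
  have husum := ortho_sum hu
  have hvsum := ortho_sum hv
  set A : ι → κ → ℝ := fun p q => ∑ i, σ i * (u i p * v i q) with hA
  set B : ι → κ → ℝ := fun p q => ∑ j, x j p * y j q with hB
  set S := Submodule.span ℝ (Set.range x) with hS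
  have hs : Module.finrank ℝ S ≤ k := by
    simpa [Set.finrank] using finrank_range_le_card (R := ℝ) x
  set s := Module.finrank ℝ S with hsdef
  set obn : OrthonormalBasis (Fin s) ℝ S := stdOrthonormalBasis ℝ S with hobn
  set w : Fin s → EuclideanSpace ℝ ι := fun t => (obn t : EuclideanSpace ℝ ι) with hwdef
  have hw : Orthonormal ℝ w := obn.orthonormal.comp_linearIsometry S.subtypeₗᵢ
  have hwsum := ortho_sum hw
  -- columns of B lie in S, expand them in the basis w
  have hBmem : ∀ c : κ, ∃ β : Fin s → ℝ, ∀ p, B p c = ∑ t, β t * w t p := by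
    intro c
    set z : EuclideanSpace ℝ ι := ∑ j, y j c • x j with hz
    have hzS : z ∈ S :=
      Submodule.sum_mem _ fun j _ => Submodule.smul_mem _ _ (Submodule.subset_span ⟨j, rfl⟩)
    refine ⟨fun t => obn.repr ⟨z, hzS⟩ t, fun p => ?_⟩
    have h := obn.sum_repr ⟨z, hzS⟩
    have h2 := congrArg (Subtype.val) h
    have h3 : ∑ t, (obn.repr ⟨z, hzS⟩ t : ℝ) • (w t) = z := by
      simpa [hwdef, Submodule.coe_sum] using h2
    have h4 : z p = ∑ t, obn.repr ⟨z, hzS⟩ t * w t p := by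
      calc z p = (∑ t, (obn.repr ⟨z, hzS⟩ t : ℝ) • (w t)) p := by rw [h3]
        _ = ∑ t, obn.repr ⟨z, hzS⟩ t * w t p := by rw [WithLp.ofLp_sum, Finset.sum_apply]; simp
    rw [← h4, hz]
    rw [WithLp.ofLp_sum, Finset.sum_apply]
    simp only [hB]
    exact Finset.sum_congr rfl fun j _ => by simp [mul_comm]
  set d : Fin s → Fin r → ℝ := fun t i => ∑ p, w t p * u i p with hd
  have hb1 : ∀ i, ∑ t, d t i ^ 2 ≤ 1 := by
    intro i
    calc ∑ t, d t i ^ 2 = ∑ t, ‖(inner ℝ (w t) (u i) : ℝ)‖ ^ 2 := by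
          refine Finset.sum_congr rfl fun t _ => ?_
          rw [euc_inner, Real.norm_eq_abs, sq_abs, hd]
      _ ≤ ‖u i‖ ^ 2 := hw.sum_inner_products_le (u i)
      _ = 1 := by rw [hu.1 i]; norm_num
  have hb2 : ∀ t, ∑ i, d t i ^ 2 ≤ 1 := by
    intro t
    calc ∑ i, d t i ^ 2 = ∑ i, ‖(inner ℝ (u i) (w t) : ℝ)‖ ^ 2 := by
          refine Finset.sum_congr rfl fun i _ => ?_
          rw [euc_inner, Real.norm_eq_abs, sq_abs, hd]
          simp [mul_comm]
      _ ≤ ‖w t‖ ^ 2 := hu.sum_inner_products_le (w t)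
      _ = 1 := by rw [hw.1 t]; norm_num
  set g : Fin s → κ → ℝ := fun t c => ∑ i, (σ i * d t i) * v i c with hg
  have hgA : ∀ t c, ∑ p, w t p * A p c = g t c := by
    intro t c
    simp only [hA, hg]
    calc ∑ p, w t p * ∑ i, σ i * (u i p * v i c)
        = ∑ p, ∑ i, (σ i * v i c) * (w t p * u i p) := by
          refine Finset.sum_congr rfl fun p _ => ?_
          rw [Finset.mul_sum]
          exact Finset.sum_congr rfl fun i _ => by ring
      _ = ∑ i, (σ i * v i c) * ∑ p, w t p * u i p := by
          rw [Finset.sum_comm]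
          exact Finset.sum_congr rfl fun i _ => (Finset.mul_sum _ _ _).symm
      _ = ∑ i, (σ i * d t i) * v i c := by
          refine Finset.sum_congr rfl fun i _ => ?_
          simp only [hd]; ring
  have hcol : ∀ c : κ, (∑ p, A p c ^ 2) - (∑ t, g t c ^ 2) ≤ ∑ p, (A p c - B p c) ^ 2 := by
    intro c
    obtain ⟨β, hβ⟩ := hBmem c
    have hAB : ∑ p, A p c * B p c = ∑ t, β t * g t c := by
      calc ∑ p, A p c * B p c = ∑ p, ∑ t, β t * (w t p * A p c) := by
            refine Finset.sum_congr rfl fun p _ => ?_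
            rw [hβ p, Finset.mul_sum]
            exact Finset.sum_congr rfl fun t _ => by ring
        _ = ∑ t, β t * ∑ p, w t p * A p c := by
            rw [Finset.sum_comm]
            exact Finset.sum_congr rfl fun t _ => (Finset.mul_sum _ _ _).symm
        _ = ∑ t, β t * g t c := Finset.sum_congr rfl fun t _ => by rw [hgA]
    have hBB : ∑ p, B p c ^ 2 = ∑ t, β t ^ 2 := by
      calc ∑ p, B p c ^ 2 = ∑ p, (∑ t, β t * w t p) ^ 2 := by
            exact Finset.sum_congr rfl fun p _ => by rw [hβ p]
        _ = ∑ t, β t ^ 2 := sum_sq_ortho (fun t p => w t p) hwsum Finset.univ β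
    have e1 : ∑ p, (A p c - B p c) ^ 2
        = (∑ p, A p c ^ 2) - 2 * (∑ t, β t * g t c) + ∑ t, β t ^ 2 := by
      have expand : ∀ p, (A p c - B p c) ^ 2
          = A p c ^ 2 - 2 * (A p c * B p c) + B p c ^ 2 := fun p => by ring
      rw [Finset.sum_congr rfl fun p _ => expand p, Finset.sum_add_distrib,
        Finset.sum_sub_distrib, ← Finset.mul_sum, hAB, hBB]
    have e2 : ∑ t, (β t - g t c) ^ 2
        = (∑ t, β t ^ 2) - 2 * (∑ t, β t * g t c) + ∑ t, g t c ^ 2 := by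
      have expand : ∀ t, (β t - g t c) ^ 2
          = β t ^ 2 - 2 * (β t * g t c) + g t c ^ 2 := fun t => by ring
      rw [Finset.sum_congr rfl fun t _ => expand t, Finset.sum_add_distrib,
        Finset.sum_sub_distrib, ← Finset.mul_sum]
    have e3 : (0:ℝ) ≤ ∑ t, (β t - g t c) ^ 2 := Finset.sum_nonneg fun t _ => sq_nonneg _
    linarith
  have hAsq : ∑ q, ∑ p, A p q ^ 2 = ∑ i, σ i ^ 2 := by
    have h := sum_sq_ortho (κ := ι × κ) (fun i pq => u i pq.1 * v i pq.2)
      (prod_ortho husum hvsum) Finset.univ σ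
    simp only [Fintype.sum_prod_type] at h
    rw [Finset.sum_comm]
    simpa only [hA] using h
  have hg2 : ∀ t, ∑ c, g t c ^ 2 = ∑ i, (σ i * d t i) ^ 2 := by
    intro t
    simp only [hg]
    exact sum_sq_ortho (fun i q => v i q) hvsum Finset.univ (fun i => σ i * d t i)
  set cc : Fin r → ℝ := fun i => ∑ t, d t i ^ 2 with hcc
  have hgtot : ∑ c, ∑ t, g t c ^ 2 = ∑ i, σ i ^ 2 * cc i := by
    rw [Finset.sum_comm]
    calc ∑ t, ∑ c, g t c ^ 2 = ∑ t, ∑ i, (σ i * d t i) ^ 2 :=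
          Finset.sum_congr rfl fun t _ => hg2 t
      _ = ∑ i, ∑ t, (σ i * d t i) ^ 2 := Finset.sum_comm
      _ = ∑ i, σ i ^ 2 * cc i := by
          refine Finset.sum_congr rfl fun i _ => ?_
          simp only [hcc, Finset.mul_sum]
          exact Finset.sum_congr rfl fun t _ => by ring
  have hccsum : ∑ i, cc i ≤ (k : ℝ) := by
    calc ∑ i, cc i = ∑ t, ∑ i, d t i ^ 2 := by simp only [hcc]; exact Finset.sum_comm
      _ ≤ ∑ _t : Fin s, (1 : ℝ) := Finset.sum_le_sum fun t _ => hb2 t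
      _ = (s : ℝ) := by simp
      _ ≤ (k : ℝ) := by exact_mod_cast hs
  have hmaj := maj hk σ hσpos hσmono cc
    (fun i => Finset.sum_nonneg fun t _ => sq_nonneg _) hb1 hccsum
  have hfilters : ∑ i ∈ Finset.univ.filter (fun i : Fin r => (i : ℕ) < k), σ i ^ 2
      + ∑ i ∈ Finset.univ.filter (fun i : Fin r => k ≤ (i : ℕ)), σ i ^ 2 = ∑ i, σ i ^ 2 := by
    rw [show Finset.univ.filter (fun i : Fin r => k ≤ (i : ℕ))
        = Finset.univ.filter (fun i : Fin r => ¬ (i : ℕ) < k) by ext i; simp [not_lt]]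
    exact Finset.sum_filter_add_sum_filter_not Finset.univ _ _
  have hsumcol := Finset.sum_le_sum fun c (_ : c ∈ (Finset.univ : Finset κ)) => hcol c
  rw [Finset.sum_sub_distrib] at hsumcol
  rw [Finset.sum_comm]
  linarith [hsumcol, hAsq, hgtot, hmaj, hfilters]

private lemma sum_pair {ι κ : Type*} [Fintype ι] [Fintype κ] (f : ι → κ → ℝ) :
    ∑ pq : ι × κ, f pq.1 pq.2 = ∑ p, ∑ q, f p q := by
  rw [Fintype.sum_prod_type]

private lemma frob_sq {m n : Type*} [Fintype m] [Fintype n] (A : Matrix m n ℝ) :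
    frob A ^ 2 = ∑ i, ∑ j, A i j ^ 2 :=
  Real.sq_sqrt (by positivity)

private lemma sum_reindex {m₁ m₂ n₁ n₂ : ℕ} (F : (Fin m₁ × Fin n₁) → (Fin m₂ × Fin n₂) → ℝ) :
    ∑ a : Fin m₁ × Fin m₂, ∑ b : Fin n₁ × Fin n₂, F (a.1, b.1) (a.2, b.2)
      = ∑ p, ∑ q, F p q := by
  simp only [Fintype.sum_prod_type]
  exact Finset.sum_congr rfl fun a₁ _ => Finset.sum_comm

/-- Optimality of the SVD-based rank-`k` Kronecker product decomposition (Van Loan–Pitsianis):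
if `ℛ(W) = Σ_{i=1}^r σ_i u_i v_iᵀ` is an SVD of the rearrangement of `W`, with nonincreasing
positive singular values, orthonormal `u_i`, `v_i` and `r = rank(ℛ(W))`, then for `k ≤ r` the
matrix `W_k = Σ_{j<k} mat(σ_j u_j) ⊗ mat(v_j)` minimizes `‖W − Σ_{j=1}^k L⁽ʲ⁾ ⊗ R⁽ʲ⁾‖_F²`,
and `‖W − W_k‖_F² = Σ_{i≥k} σ_i²`. -/
theorem svd_kronecker_truncation_optimal {m₁ m₂ n₁ n₂ : ℕ}
    (W : Matrix (Fin m₁ × Fin m₂) (Fin n₁ × Fin n₂) ℝ)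
    (r : ℕ) (hr : r = (rearrange W).rank)
    (σ : Fin r → ℝ) (hσpos : ∀ i, 0 < σ i)
    (hσmono : ∀ i j : Fin r, i ≤ j → σ j ≤ σ i)
    (u : Fin r → EuclideanSpace ℝ (Fin m₁ × Fin n₁))
    (v : Fin r → EuclideanSpace ℝ (Fin m₂ × Fin n₂))
    (hu : Orthonormal ℝ u) (hv : Orthonormal ℝ v)
    (hsvd : rearrange W = ∑ i, σ i • vecMulVec (u i) (v i))
    (k : ℕ) (hk : k ≤ r)
    (Wk : Matrix (Fin m₁ × Fin m₂) (Fin n₁ × Fin n₂) ℝ)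
    (hWk : Wk = ∑ i ∈ Finset.univ.filter (fun i : Fin r => (i : ℕ) < k),
      matPair (σ i • u i) ⊗ₖ matPair (v i)) :
    IsLeast {e : ℝ | ∃ (Ls : Fin k → Matrix (Fin m₁) (Fin n₁) ℝ)
        (Rs : Fin k → Matrix (Fin m₂) (Fin n₂) ℝ),
        e = frob (W - ∑ j, Ls j ⊗ₖ Rs j) ^ 2} (frob (W - Wk) ^ 2) ∧
    frob (W - Wk) ^ 2 =
      ∑ i ∈ Finset.univ.filter (fun i : Fin r => k ≤ (i : ℕ)), σ i ^ 2 := by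
  classical
  have husum := ortho_sum hu
  have hvsum := ortho_sum hv
  have hWe : ∀ (a : Fin m₁ × Fin m₂) (b : Fin n₁ × Fin n₂),
      W a b = ∑ i, σ i * (u i (a.1, b.1) * v i (a.2, b.2)) := by
    intro a b
    have h := congrFun (congrFun hsvd (a.1, b.1)) (a.2, b.2)
    have h0 : rearrange W (a.1, b.1) (a.2, b.2) = W a b := by simp [rearrange]
    rw [h0] at h
    rw [h, Matrix.sum_apply]
    refine Finset.sum_congr rfl fun i _ => ?_
    simp [Matrix.smul_apply, Matrix.vecMulVec_apply, smul_eq_mul]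
  have hWke : ∀ (a : Fin m₁ × Fin m₂) (b : Fin n₁ × Fin n₂),
      Wk a b = ∑ i ∈ Finset.univ.filter (fun i : Fin r => (i : ℕ) < k),
        σ i * (u i (a.1, b.1) * v i (a.2, b.2)) := by
    intro a b
    rw [hWk, Matrix.sum_apply]
    refine Finset.sum_congr rfl fun i _ => ?_
    simp [Matrix.kroneckerMap_apply, matPair, smul_eq_mul, mul_assoc]
  have hdiff : ∀ (a : Fin m₁ × Fin m₂) (b : Fin n₁ × Fin n₂),
      (W - Wk) a b = ∑ i ∈ Finset.univ.filter (fun i : Fin r => k ≤ (i : ℕ)),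
        σ i * (u i (a.1, b.1) * v i (a.2, b.2)) := by
    intro a b
    have hsp := Finset.sum_filter_add_sum_filter_not Finset.univ
      (fun i : Fin r => (i : ℕ) < k) (fun i => σ i * (u i (a.1, b.1) * v i (a.2, b.2)))
    have hflt : Finset.univ.filter (fun i : Fin r => k ≤ (i : ℕ))
        = Finset.univ.filter (fun i : Fin r => ¬ (i : ℕ) < k) := by
      ext i; simp [not_lt]
    rw [Matrix.sub_apply, hWe a b, hWke a b, hflt]
    linarith
  have hval : frob (W - Wk) ^ 2 =
      ∑ i ∈ Finset.univ.filter (fun i : Fin r => k ≤ (i : ℕ)), σ i ^ 2 := by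
    rw [frob_sq]
    calc ∑ a, ∑ b, (W - Wk) a b ^ 2
        = ∑ a : Fin m₁ × Fin m₂, ∑ b : Fin n₁ × Fin n₂,
            (∑ i ∈ Finset.univ.filter (fun i : Fin r => k ≤ (i : ℕ)),
              σ i * (u i (a.1, b.1) * v i (a.2, b.2))) ^ 2 := by
          exact Finset.sum_congr rfl fun a _ => Finset.sum_congr rfl fun b _ => by
            rw [hdiff a b]
      _ = ∑ p, ∑ q, (∑ i ∈ Finset.univ.filter (fun i : Fin r => k ≤ (i : ℕ)),
              σ i * (u i p * v i q)) ^ 2 :=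
          sum_reindex (fun p q => (∑ i ∈ Finset.univ.filter (fun i : Fin r => k ≤ (i : ℕ)),
              σ i * (u i p * v i q)) ^ 2)
      _ = ∑ i ∈ Finset.univ.filter (fun i : Fin r => k ≤ (i : ℕ)), σ i ^ 2 := by
          have h := sum_sq_ortho (κ := (Fin m₁ × Fin n₁) × (Fin m₂ × Fin n₂))
            (fun i pq => u i pq.1 * v i pq.2) (prod_ortho husum hvsum)
            (Finset.univ.filter (fun i : Fin r => k ≤ (i : ℕ))) σ
          exact (sum_pair (fun p q => (∑ i ∈ Finset.univ.filter (fun i : Fin r => k ≤ (i : ℕ)),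
            σ i * (u i p * v i q)) ^ 2)).symm.trans h
  refine ⟨⟨?_, ?_⟩, hval⟩
  · -- membership
    refine ⟨fun j => matPair (σ (Fin.castLE hk j) • u (Fin.castLE hk j)),
      fun j => matPair (v (Fin.castLE hk j)), ?_⟩
    have hWk2 : Wk = ∑ j : Fin k,
        matPair (σ (Fin.castLE hk j) • u (Fin.castLE hk j)) ⊗ₖ matPair (v (Fin.castLE hk j)) := by
      rw [hWk]
      refine Finset.sum_bij'
        (fun (a : Fin r) (ha : a ∈ Finset.univ.filter (fun i : Fin r => (i : ℕ) < k)) =>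
          (⟨(a : ℕ), (Finset.mem_filter.mp ha).2⟩ : Fin k))
        (fun (b : Fin k) (_ : b ∈ Finset.univ) => Fin.castLE hk b)
        (fun a ha => Finset.mem_univ _)
        (fun b _ => Finset.mem_filter.mpr ⟨Finset.mem_univ _, b.isLt⟩)
        (fun a ha => rfl) (fun b _ => rfl) (fun a ha => rfl)
    rw [hWk2]; rfl
  · -- lower bound
    rintro e ⟨Ls, Rs, rfl⟩
    rw [hval, frob_sq]
    have hentry : ∀ (a : Fin m₁ × Fin m₂) (b : Fin n₁ × Fin n₂),
        (W - ∑ j, Ls j ⊗ₖ Rs j) a b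
          = (∑ i, σ i * (u i (a.1, b.1) * v i (a.2, b.2)))
            - ∑ j, (fun p : Fin m₁ × Fin n₁ => Ls j p.1 p.2) (a.1, b.1)
                * (fun q : Fin m₂ × Fin n₂ => Rs j q.1 q.2) (a.2, b.2) := by
      intro a b
      rw [Matrix.sub_apply, hWe a b, Matrix.sum_apply]
      congr 1
    calc ∑ a, ∑ b, (W - ∑ j, Ls j ⊗ₖ Rs j) a b ^ 2
        = ∑ a : Fin m₁ × Fin m₂, ∑ b : Fin n₁ × Fin n₂,
            ((∑ i, σ i * (u i (a.1, b.1) * v i (a.2, b.2)))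
              - ∑ j, (fun p : Fin m₁ × Fin n₁ => Ls j p.1 p.2) (a.1, b.1)
                  * (fun q : Fin m₂ × Fin n₂ => Rs j q.1 q.2) (a.2, b.2)) ^ 2 :=
          Finset.sum_congr rfl fun a _ => Finset.sum_congr rfl fun b _ => by
            rw [hentry a b]
      _ = ∑ p, ∑ q, ((∑ i, σ i * (u i p * v i q))
              - ∑ j, (fun p : Fin m₁ × Fin n₁ => Ls j p.1 p.2) p
                  * (fun q : Fin m₂ × Fin n₂ => Rs j q.1 q.2) q) ^ 2 :=
          sum_reindex (fun p q => ((∑ i, σ i * (u i p * v i q))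
              - ∑ j, (fun p : Fin m₁ × Fin n₁ => Ls j p.1 p.2) p
                  * (fun q : Fin m₂ × Fin n₂ => Rs j q.1 q.2) q) ^ 2)
      _ ≥ ∑ i ∈ Finset.univ.filter (fun i : Fin r => k ≤ (i : ℕ)), σ i ^ 2 :=
          lowerBound hk σ hσpos hσmono u v hu hv
            (fun j => WithLp.toLp 2 (fun p : Fin m₁ × Fin n₁ => Ls j p.1 p.2))
            (fun j => WithLp.toLp 2 (fun q : Fin m₂ × Fin n₂ => Rs j q.1 q.2))
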